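/- For any fixed C ≥ 0 (possibly +∞) and any integer T ≥ 1, the map z ↦ Ψ_-^{-1}(z,C) is non-decreasing with respect to the partial order ⪰ on [0,1]^T; that is, if z ⪰ z' then Ψ_-^{-1}(z,C) ≥ Ψ_-^{-1}(z',C). -/

import Mathlib

open MeasureTheory Set

/-- Extended-real logarithm: `log ⊤ = ⊤`, `log x = -∞` for `x ≤ 0` (in particular `log 0 = -∞`). -/
noncomputable def elog (x : EReal) : EReal :=
  if x = ⊤ then ⊤ else if x ≤ 0 then ⊥ else ((Real.log x.toReal : ℝ) : EReal)

/-- Lower endpoint `-1/(1-μ)` of the betting interval, with the convention `1/0 = +∞`. -/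
noncomputable def betLower (μ : ℝ) : EReal := if μ = 1 then ⊥ else ((-(1 - μ)⁻¹ : ℝ) : EReal)

/-- Upper endpoint `1/μ` of the betting interval, with the convention `1/0 = +∞`. -/
noncomputable def betUpper (μ : ℝ) : EReal := if μ = 0 then ⊤ else ((μ⁻¹ : ℝ) : EReal)

/-- The betting interval `A_μ = [-1/(1-μ), 1/μ]` (as a set of extended reals). -/
noncomputable def betSet (μ : ℝ) : Set EReal := Set.Icc (betLower μ) (betUpper μ)

/-- `(1/T) ∑_t log(1 + α (z_t - μ))`, with EReal conventions (`0 * ±∞ = 0`, `log 0 = -∞`). -/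
noncomputable def betTerm {T : ℕ} (z : Fin T → ℝ) (μ : ℝ) (α : EReal) : EReal :=
  (((T : ℝ)⁻¹ : ℝ) : EReal) * ∑ t : Fin T, elog (1 + α * ((z t - μ : ℝ) : EReal))

/-- `Ψ(z, μ) = sup_{α ∈ A_μ} (1/T) ∑_t log(1 + α (z_t - μ))`. -/
noncomputable def Psi {T : ℕ} (z : Fin T → ℝ) (μ : ℝ) : EReal :=
  ⨆ α ∈ betSet μ, betTerm z μ α

/-- `μ_z = (1/T) ∑_t z_t`. -/
noncomputable def muz {T : ℕ} (z : Fin T → ℝ) : ℝ := (T : ℝ)⁻¹ * ∑ t, z t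

/-- The upper inverse `Ψ_+^{-1}(z, C) = sup {μ ∈ [0,1] : Ψ(z,μ) ≤ C}`. -/
noncomputable def PsiInvPlus {T : ℕ} (z : Fin T → ℝ) (C : EReal) : ℝ :=
  sSup {μ : ℝ | μ ∈ Set.Icc (0 : ℝ) 1 ∧ Psi z μ ≤ C}

/-- The lower inverse `Ψ_-^{-1}(z, C) = inf {μ ∈ [0,1] : Ψ(z,μ) ≤ C}`. -/
noncomputable def PsiInvMinus {T : ℕ} (z : Fin T → ℝ) (C : EReal) : ℝ :=
  sInf {μ : ℝ | μ ∈ Set.Icc (0 : ℝ) 1 ∧ Psi z μ ≤ C}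

lemma coe_sum' {T : ℕ} (f : Fin T → ℝ) :
    ((∑ t, f t : ℝ) : EReal) = ∑ t, ((f t : ℝ) : EReal) :=
  map_sum (⟨⟨Real.toEReal, EReal.coe_zero⟩, EReal.coe_add⟩ : ℝ →+ EReal) f Finset.univ

lemma elog_one : elog 1 = 0 := by
  rw [show (1 : EReal) = ((1:ℝ) : EReal) from rfl]
  unfold elog
  rw [if_neg (EReal.coe_ne_top 1), if_neg (by norm_num)]
  simp [Real.log_one]

lemma elog_mono : Monotone elog := by
  intro x y hxy
  unfold elog
  by_cases hy : y = ⊤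
  · simp [hy]
  by_cases hx : x ≤ 0
  · by_cases hxt : x = ⊤
    · exact absurd (hxt ▸ hxy) (by simp [hy])
    · simp [hx, hxt]
  push_neg at hx
  have hx' : ¬ x ≤ 0 := not_le.2 hx
  have hxt : x ≠ ⊤ := fun h => hy (top_le_iff.mp (h ▸ hxy))
  have hxb : x ≠ ⊥ := fun h => hx' (h ▸ bot_le)
  have hy0 : ¬ y ≤ 0 := fun h => hx' (hxy.trans h)
  simp only [hy, hx', hy0, if_false, hxt]
  have hxpos : 0 < x.toReal := by
    have := EReal.coe_toReal hxt hxb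
    rw [← EReal.coe_pos, this]; exact hx
  exact EReal.coe_le_coe_iff.2 (Real.log_le_log hxpos
    (EReal.toReal_le_toReal hxy hxb hy))

lemma elog_coe_le (r : ℝ) : elog (r : EReal) ≤ ((r - 1 : ℝ) : EReal) := by
  unfold elog
  rcases le_or_gt r 0 with h | h
  · simp [EReal.coe_ne_top, h, EReal.coe_nonpos.2 h]
  · have h1 : ¬ ((r : EReal) ≤ 0) := by simpa using not_le.2 h
    simp only [EReal.coe_ne_top, if_false, h1, EReal.toReal_coe]
    exact EReal.coe_le_coe_iff.2 (Real.log_le_sub_one_of_pos h)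

lemma betTerm_const {T : ℕ} (z : Fin T → ℝ) (μ : ℝ) (hzμ : ∀ t, z t = μ) (α : EReal) :
    betTerm z μ α = 0 := by
  unfold betTerm
  have h : ∀ t ∈ Finset.univ, elog (1 + α * ((z t - μ : ℝ) : EReal)) = 0 := fun t _ => by
    rw [hzμ t, sub_self, EReal.coe_zero, mul_zero, add_zero, elog_one]
  rw [Finset.sum_congr rfl h, Finset.sum_const_zero, mul_zero]

lemma coeTinv_nonneg (T : ℕ) : (0 : EReal) ≤ (((T : ℝ)⁻¹ : ℝ) : EReal) := by
  rw [← EReal.coe_zero, EReal.coe_le_coe_iff]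
  positivity

lemma betTerm_real_le {T : ℕ} (hT : 0 < T) (z : Fin T → ℝ) (μ α : ℝ) :
    betTerm z μ (α : EReal) ≤ ((α * (muz z - μ) : ℝ) : EReal) := by
  unfold betTerm
  have h1 : ∀ t ∈ Finset.univ, elog (1 + (α : EReal) * ((z t - μ : ℝ) : EReal))
      ≤ (((α * (z t - μ) : ℝ)) : EReal) := by
    intro t _
    have he : (1 : EReal) + (α : EReal) * ((z t - μ : ℝ) : EReal)
        = (((1 + α * (z t - μ) : ℝ)) : EReal) := by
      rw [EReal.coe_add, EReal.coe_mul, EReal.coe_one]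
    rw [he]
    have := elog_coe_le (1 + α * (z t - μ))
    simpa using this
  have h2 : ∑ t, elog (1 + (α : EReal) * ((z t - μ : ℝ) : EReal))
      ≤ ((∑ t, α * (z t - μ) : ℝ) : EReal) := by
    rw [coe_sum']
    exact Finset.sum_le_sum h1
  have h3 := mul_le_mul_of_nonneg_left h2 (coeTinv_nonneg T)
  refine h3.trans (le_of_eq ?_)
  rw [← EReal.coe_mul]
  congr 1
  have hT' : (T : ℝ) ≠ 0 := by positivity
  have hsum : ∑ t : Fin T, α * (z t - μ) = α * (∑ t, z t) - (T : ℝ) * (α * μ) := by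
    simp [mul_sub, Finset.sum_sub_distrib, ← Finset.mul_sum, Finset.card_univ]
  rw [hsum, muz]
  field_simp

lemma betTerm_mono {T : ℕ} {z z' : Fin T → ℝ} (hord : ∀ t, z' t ≤ z t) (μ : ℝ)
    {α : EReal} (hα : 0 ≤ α) : betTerm z' μ α ≤ betTerm z μ α := by
  unfold betTerm
  refine mul_le_mul_of_nonneg_left (Finset.sum_le_sum fun t _ => ?_) (coeTinv_nonneg T)
  refine elog_mono (add_le_add_right ?_ 1)
  exact mul_le_mul_of_nonneg_left (EReal.coe_le_coe_iff.2 (by linarith [hord t])) hα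

lemma muz_mem_Icc {T : ℕ} (hT : 0 < T) {z : Fin T → ℝ} (hz : ∀ t, z t ∈ Set.Icc (0:ℝ) 1) :
    muz z ∈ Set.Icc (0:ℝ) 1 := by
  have hT' : (0:ℝ) < T := by exact_mod_cast hT
  constructor
  · exact mul_nonneg (by positivity) (Finset.sum_nonneg fun t _ => (hz t).1)
  · have : ∑ t, z t ≤ ∑ _t : Fin T, (1:ℝ) := Finset.sum_le_sum fun t _ => (hz t).2
    simp only [Finset.sum_const, Finset.card_univ, Fintype.card_fin, smul_eq_mul, nsmul_eq_mul, mul_one] at this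
    rw [muz]
    calc (T:ℝ)⁻¹ * ∑ t, z t ≤ (T:ℝ)⁻¹ * T := by
          exact mul_le_mul_of_nonneg_left this (by positivity)
      _ = 1 := by field_simp

lemma all_eq_one {T : ℕ} (hT : 0 < T) {z : Fin T → ℝ} (hz : ∀ t, z t ∈ Set.Icc (0:ℝ) 1)
    (h : 1 ≤ muz z) : ∀ t, z t = 1 := by
  have hT' : (0:ℝ) < T := by exact_mod_cast hT
  have hsum : (T:ℝ) ≤ ∑ t, z t := by
    rw [muz] at h
    calc (T:ℝ) = T * 1 := by ring
      _ ≤ T * ((T:ℝ)⁻¹ * ∑ t, z t) := by exact mul_le_mul_of_nonneg_left h (by positivity)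
      _ = ∑ t, z t := by field_simp
  have hzero : ∑ t : Fin T, (1 - z t) ≤ 0 := by
    simp only [Finset.sum_sub_distrib, Finset.sum_const, Finset.card_univ, Fintype.card_fin,
      smul_eq_mul, nsmul_eq_mul, mul_one]
    linarith
  have := (Finset.sum_eq_zero_iff_of_nonneg (fun t _ => by linarith [(hz t).2])).1
    (le_antisymm hzero (Finset.sum_nonneg fun t _ => by linarith [(hz t).2]))
  intro t
  have := this t (Finset.mem_univ t)
  linarith

lemma all_eq_zero {T : ℕ} (hT : 0 < T) {z : Fin T → ℝ} (hz : ∀ t, z t ∈ Set.Icc (0:ℝ) 1)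
    (h : muz z ≤ 0) : ∀ t, z t = 0 := by
  have hT' : (0:ℝ) < T := by exact_mod_cast hT
  have hsum : ∑ t, z t ≤ 0 := by
    rw [muz] at h
    nlinarith [mul_le_mul_of_nonneg_left h hT'.le, inv_mul_cancel₀ hT'.ne']
  have := (Finset.sum_eq_zero_iff_of_nonneg (fun t _ => (hz t).1)).1
    (le_antisymm hsum (Finset.sum_nonneg fun t _ => (hz t).1))
  exact fun t => this t (Finset.mem_univ t)

lemma betLower_eq_bot {μ : ℝ} (h : betLower μ = ⊥) : μ = 1 := by
  by_contra hne
  rw [betLower, if_neg hne] at h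
  exact EReal.coe_ne_bot _ h

lemma psi_muz_le_zero {T : ℕ} (hT : 0 < T) {z : Fin T → ℝ}
    (hz : ∀ t, z t ∈ Set.Icc (0:ℝ) 1) : Psi z (muz z) ≤ 0 := by
  refine iSup₂_le fun α hα => ?_
  induction α using EReal.rec with
  | bot =>
      have hμ1 : muz z = 1 := betLower_eq_bot (le_bot_iff.mp hα.1)
      have h1 : ∀ t, z t = muz z := fun t => by rw [hμ1]; exact all_eq_one hT hz hμ1.ge t
      exact (betTerm_const z (muz z) h1 ⊥).le
  | coe a =>
      refine (betTerm_real_le hT z (muz z) a).trans ?_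
      rw [sub_self, mul_zero, EReal.coe_zero]
  | top =>
      have hμ0 : muz z = 0 := by
        by_contra hne
        have := hα.2
        rw [betUpper, if_neg hne] at this
        exact EReal.coe_ne_top _ (top_le_iff.mp this)
      have h1 : ∀ t, z t = muz z := fun t => by rw [hμ0]; exact all_eq_zero hT hz hμ0.le t
      exact (betTerm_const z (muz z) h1 ⊤).le

lemma psi_le_of_le {T : ℕ} (hT : 0 < T) {C : EReal} (hC : 0 ≤ C) {z z' : Fin T → ℝ}
    (hz' : ∀ t, z' t ∈ Set.Icc (0:ℝ) 1) (hord : ∀ t, z' t ≤ z t) {μ : ℝ}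
    (hμ : μ ≤ muz z') (hPsi : Psi z μ ≤ C) : Psi z' μ ≤ C := by
  refine iSup₂_le fun α hα => ?_
  induction α using EReal.rec with
  | bot =>
      have hμ1 : μ = 1 := betLower_eq_bot (le_bot_iff.mp hα.1)
      have hmz : 1 ≤ muz z' := hμ1 ▸ hμ
      have h1 : ∀ t, z' t = μ := fun t => by rw [hμ1]; exact all_eq_one hT hz' hmz t
      exact (betTerm_const z' μ h1 ⊥).le.trans hC
  | coe a =>
      rcases le_or_gt a 0 with ha | ha
      · refine (betTerm_real_le hT z' μ a).trans (le_trans ?_ hC)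
        rw [← EReal.coe_zero, EReal.coe_le_coe_iff]
        have : 0 ≤ muz z' - μ := by linarith
        exact mul_nonpos_iff.2 (Or.inr ⟨ha, this⟩)
      · refine (betTerm_mono hord μ (by exact_mod_cast ha.le)).trans (le_trans ?_ hPsi)
        exact le_iSup₂ (f := fun (α : EReal) (_ : α ∈ betSet μ) => betTerm z μ α) (a : EReal) hα
  | top =>
      refine ((betTerm_mono hord μ (le_top : (0:EReal) ≤ ⊤)).trans (le_trans ?_ hPsi))
      exact le_iSup₂ (f := fun (α : EReal) (_ : α ∈ betSet μ) => betTerm z μ α) ⊤ hα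


/-- For fixed `C ≥ 0` (possibly `+∞`), `z ↦ Ψ_-^{-1}(z, C)` is non-decreasing w.r.t. the
coordinatewise order `⪰` on `[0,1]^T`. -/
theorem psiInvMinus_mono {T : ℕ} (hT : 1 ≤ T) (C : EReal) (hC : 0 ≤ C)
    (z z' : Fin T → ℝ)
    (hz : ∀ t, z t ∈ Set.Icc (0 : ℝ) 1) (hz' : ∀ t, z' t ∈ Set.Icc (0 : ℝ) 1)
    (hord : ∀ t, z' t ≤ z t) :
    PsiInvMinus z' C ≤ PsiInvMinus z C := by
  have hT0 : 0 < T := hT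
  have hbdd' : BddBelow {μ : ℝ | μ ∈ Set.Icc (0:ℝ) 1 ∧ Psi z' μ ≤ C} :=
    ⟨0, fun x hx => hx.1.1⟩
  have hmem' : muz z' ∈ {μ : ℝ | μ ∈ Set.Icc (0:ℝ) 1 ∧ Psi z' μ ≤ C} :=
    ⟨muz_mem_Icc hT0 hz', (psi_muz_le_zero hT0 hz').trans hC⟩
  have hmem : muz z ∈ {μ : ℝ | μ ∈ Set.Icc (0:ℝ) 1 ∧ Psi z μ ≤ C} :=
    ⟨muz_mem_Icc hT0 hz, (psi_muz_le_zero hT0 hz).trans hC⟩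
  refine le_csInf ⟨muz z, hmem⟩ fun b hb => ?_
  rcases le_or_gt (muz z') b with h | h
  · exact (csInf_le hbdd' hmem').trans h
  · exact csInf_le hbdd' ⟨hb.1, psi_le_of_le hT0 hC hz' hord h.le hb.2⟩
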